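/- For every n ≥ 1, the n×n lower triangular matrix M_n with (i,j) entry m_{i,j} := Σ_{d|i} p(d−j) μ(i/d) for 1 ≤ j ≤ i ≤ n (and 0 for j > i) is the inverse of A_n; that is, M_n · A_n = A_n · M_n = I_n. -/

import Mathlib

/-!
STATEMENT 8: For every `n ≥ 1`, the `n × n` lower triangular matrix `M_n` with `(i,j)` entry
`m_{i,j} = ∑_{d ∣ i} p(d-j) μ(i/d)` for `1 ≤ j ≤ i ≤ n` (and `0` for `j > i`, where
`p(m) = 0` for `m < 0`) is the inverse of `A_n`:  `M_n ⬝ A_n = A_n ⬝ M_n = I_n`.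
-/

open ArithmeticFunction

/-- `c(m) = (-1)^k` when `m = k(3k+1)/2` or `m = k(3k-1)/2` for some integer `k ≥ 0`,
and `c(m) = 0` otherwise. -/
def pentCoeff (m : ℤ) : ℤ :=
  ∑ k ∈ Finset.range (m.toNat + 1),
    ((if 2 * m = (k : ℤ) * (3 * k + 1) then (-1 : ℤ) ^ k else 0) +
      (if 2 * m = (k : ℤ) * (3 * k - 1) ∧ 1 ≤ k then (-1 : ℤ) ^ k else 0))

/-- `a_{n,i} := ∑_{s=0}^{⌊n/i⌋ - 1} c(n - (s+1) i)`. -/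
def aEnt (n i : ℕ) : ℤ :=
  ∑ s ∈ Finset.range (n / i), pentCoeff ((n : ℤ) - (s + 1) * i)

/-- The matrix `A_n`, with `(i,j)` entry `a_{i,j}` for `1 ≤ j ≤ i ≤ n` and `0` for `j > i`
(indices shifted to `Fin n`). -/
def Amat (n : ℕ) : Matrix (Fin n) (Fin n) ℤ :=
  fun i j => if (j : ℕ) ≤ (i : ℕ) then aEnt ((i : ℕ) + 1) ((j : ℕ) + 1) else 0

/-- Euler's partition function `p(n)` (number of partitions of `n`), for `n ≥ 0`. -/
def partitionFun (n : ℕ) : ℕ := Fintype.card (Nat.Partition n)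

/-- The matrix `M_n`, with `(i,j)` entry `∑_{d ∣ i} p(d-j) μ(i/d)` for `1 ≤ j ≤ i ≤ n`
and `0` for `j > i`; the convention `p(m) = 0` for `m < 0` is enforced by the guard
`j ≤ d` (indices shifted to `Fin n`). -/
def Mmat (n : ℕ) : Matrix (Fin n) (Fin n) ℤ :=
  fun i j =>
    if (j : ℕ) ≤ (i : ℕ) then
      ∑ d ∈ Nat.divisors ((i : ℕ) + 1),
        (if (j : ℕ) + 1 ≤ d then (partitionFun (d - ((j : ℕ) + 1)) : ℤ) else 0) *
          moebius (((i : ℕ) + 1) / d)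
    else 0

set_option linter.unusedSectionVars false
set_option linter.unusedVariables false

namespace Stmt8

open Finset


/-- pentagonal number `j(3j+1)/2` for `j : ℤ`. -/
def gz (j : ℤ) : ℤ := j * (3 * j + 1) / 2

lemma two_gz (j : ℤ) : 2 * gz j = j * (3 * j + 1) := by
  have h : (2 : ℤ) ∣ j * (3 * j + 1) := by
    rcases Int.even_or_odd j with he | ho
    · exact Dvd.dvd.mul_right he.two_dvd _
    · have : Even (3 * j + 1) := by
        rcases ho with ⟨k, hk⟩; exact ⟨3 * k + 2, by omega⟩
      exact Dvd.dvd.mul_left this.two_dvd _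
  rw [gz, Int.mul_ediv_cancel' h]

lemma gz_pred (j : ℤ) : gz (j - 1) = gz j - 3 * j + 1 := by
  have h1 := two_gz j; have h2 := two_gz (j - 1); nlinarith [h1, h2]

lemma gz_succ (j : ℤ) : gz (j + 1) = gz j + 3 * j + 2 := by
  have h1 := two_gz j; have h2 := two_gz (j + 1); nlinarith [h1, h2]

lemma gz_nonneg (j : ℤ) : 0 ≤ gz j := by
  have h := two_gz j
  rcases le_or_gt 0 j with hj | hj
  · nlinarith
  · nlinarith

lemma abs_le_of_gz_le {j : ℤ} {d : ℤ} (h : gz j ≤ d) : |j| ≤ d := by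
  have h2 := two_gz j
  rcases le_or_gt 0 j with hj | hj
  · rw [abs_of_nonneg hj]
    have hge : j * (3 * j + 1) ≥ 2 * j := by nlinarith [mul_nonneg hj hj]
    omega
  · rw [abs_of_neg hj]; nlinarith [h2, h, hj]

/-- the sign `(-1)^j` for `j : ℤ`. -/
def eps (j : ℤ) : ℤ := if Even j then 1 else -1

lemma eps_succ (j : ℤ) : eps (j + 1) = - eps j := by
  by_cases h : Even j <;> simp [eps, Int.even_add_one, h]

lemma eps_pred (j : ℤ) : eps (j - 1) = - eps j := by
  have := eps_succ (j - 1); simp at this; omega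

lemma eps_natCast (k : ℕ) : eps (k : ℤ) = (-1 : ℤ) ^ k := by
  unfold eps
  by_cases h : Even k
  · rw [if_pos (by exact_mod_cast h), h.neg_one_pow]
  · rw [if_neg (by exact_mod_cast h), (Nat.not_even_iff_odd.mp h).neg_one_pow]

lemma eps_neg (j : ℤ) : eps (-j) = eps j := by simp [eps]


open Multiset

lemma sup_mem {s : Multiset ℕ} (h : s ≠ 0) : s.sup ∈ s := by
  induction s using Multiset.induction_on with
  | empty => exact absurd rfl h
  | cons a t ih =>
    rw [Multiset.sup_cons]
    rcases eq_or_ne t 0 with rfl | ht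
    · simp
    · rcases le_total a t.sup with hle | hle
      · rw [sup_eq_right.mpr hle]; exact Multiset.mem_cons_of_mem (ih ht)
      · rw [sup_eq_left.mpr hle]; exact Multiset.mem_cons_self _ _

lemma sum_filter_pos (s : Multiset ℕ) : (s.filter (0 < ·)).sum = s.sum := by
  induction s using Multiset.induction_on with
  | empty => simp
  | cons a t ih =>
    by_cases h : 0 < a
    · rw [Multiset.filter_cons_of_pos _ h, Multiset.sum_cons, Multiset.sum_cons, ih]
    · rw [Multiset.filter_cons_of_neg _ h, Multiset.sum_cons, ih]; omega

lemma sup_filter_pos (s : Multiset ℕ) : (s.filter (0 < ·)).sup = s.sup := by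
  induction s using Multiset.induction_on with
  | empty => simp
  | cons a t ih =>
    by_cases h : 0 < a
    · rw [Multiset.filter_cons_of_pos _ h, Multiset.sup_cons, Multiset.sup_cons, ih]
    · rw [Multiset.filter_cons_of_neg _ h, Multiset.sup_cons, ih]
      have : a = 0 := by omega
      simp [this]

lemma sum_map_pred (s : Multiset ℕ) (h : ∀ x ∈ s, 1 ≤ x) :
    (s.map (· - 1)).sum = s.sum - Multiset.card s := by
  induction s using Multiset.induction_on with
  | empty => simp
  | cons a t ih =>
    have ha : 1 ≤ a := h a (Multiset.mem_cons_self _ _)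
    have ht : ∀ x ∈ t, 1 ≤ x := fun x hx => h x (Multiset.mem_cons_of_mem hx)
    have hc : Multiset.card t ≤ t.sum := by
      simpa using Multiset.card_nsmul_le_sum ht
    rw [Multiset.map_cons, Multiset.sum_cons, Multiset.sum_cons, ih ht]
    simp only [Multiset.card_cons]
    omega

lemma card_le_sum' (s : Multiset ℕ) (h : ∀ x ∈ s, 1 ≤ x) : Multiset.card s ≤ s.sum := by
  simpa using Multiset.card_nsmul_le_sum h

lemma sup_map_pred (s : Multiset ℕ) : (s.map (· - 1)).sup = s.sup - 1 := by
  induction s using Multiset.induction_on with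
  | empty => simp
  | cons a t ih =>
    rw [Multiset.map_cons, Multiset.sup_cons, Multiset.sup_cons, ih]
    have hmax : ∀ x y : ℕ, x ⊔ y = max x y := fun _ _ => rfl
    rw [hmax, hmax, Nat.max_def, Nat.max_def]
    split_ifs <;> omega

lemma map_succ_filter_pos_map_pred (s : Multiset ℕ) :
    ((s.map (· - 1)).filter (0 < ·)).map (· + 1) = s.filter (2 ≤ ·) := by
  induction s using Multiset.induction_on with
  | empty => simp
  | cons a t ih =>
    rw [Multiset.map_cons]
    by_cases h : 2 ≤ a
    · rw [Multiset.filter_cons_of_pos _ (by omega : 0 < a - 1),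
        Multiset.map_cons, ih, Multiset.filter_cons_of_pos _ h]
      congr 1; omega
    · rw [Multiset.filter_cons_of_neg _ (by omega : ¬ 0 < a - 1), ih,
        Multiset.filter_cons_of_neg _ h]

lemma filter_le_one_eq_replicate (s : Multiset ℕ) (hpos : ∀ x ∈ s, 1 ≤ x) :
    s.filter (fun x => ¬ 2 ≤ x) = Multiset.replicate (Multiset.card s - Multiset.card (s.filter (2 ≤ ·))) 1 := by
  have h1 : ∀ b ∈ s.filter (fun x => ¬ 2 ≤ x), b = 1 := by
    intro b hb
    rw [Multiset.mem_filter] at hb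
    have := hpos b hb.1
    omega
  have h2 := Multiset.eq_replicate_card.mpr h1
  rw [h2]
  congr 1
  have := Multiset.filter_add_not (fun x => 2 ≤ x) s
  have hcard := congrArg Multiset.card this
  rw [Multiset.card_add] at hcard
  omega

lemma sup_replicate_one (k : ℕ) : (Multiset.replicate k 1).sup = if k = 0 then 0 else 1 := by
  induction k with
  | zero => simp
  | succ n ih => rw [Multiset.replicate_succ, Multiset.sup_cons, ih]; split <;> simp

open Multiset

/-- Branch condition of the Bressoud–Zeilberger involution. -/
def cond (s : Multiset ℕ) (j : ℤ) : Prop := (s.sup : ℤ) ≤ (Multiset.card s : ℤ) + 3 * j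

instance cond_dec (s : Multiset ℕ) (j : ℤ) : Decidable (cond s j) := by
  unfold cond; infer_instance

/-- branch A of the involution (`j ↦ j - 1`). -/
def tA (s : Multiset ℕ) (j : ℤ) : Multiset ℕ :=
  ((((Multiset.card s : ℤ) + 3 * j - 1).toNat) ::ₘ s.map (· - 1)).filter (0 < ·)

/-- branch B of the involution (`j ↦ j + 1`). -/
def tB (s : Multiset ℕ) (j : ℤ) : Multiset ℕ :=
  if s = 0 then Multiset.replicate ((-3 * j - 2).toNat) 1
  else (s.erase s.sup).map (· + 1) +
    Multiset.replicate (((s.sup : ℤ) - (Multiset.card s : ℤ) - 3 * j - 1).toNat) 1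

section A
variable {s : Multiset ℕ} {j : ℤ} (hpos : ∀ x ∈ s, 1 ≤ x) (hc : cond s j)
  (H : s = 0 → 1 ≤ j)

include hpos hc H

lemma sup_pos_of_ne (hs : s ≠ 0) : 1 ≤ s.sup := hpos _ (sup_mem hs)

lemma wA_nonneg : 0 ≤ (Multiset.card s : ℤ) + 3 * j - 1 := by
  rcases eq_or_ne s 0 with rfl | hs
  · have := H rfl; simp; omega
  · have h1 := sup_pos_of_ne hpos hc H hs
    have := hc
    unfold cond at this
    omega

lemma tA_pos : ∀ x ∈ tA s j, 0 < x := by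
  intro x hx
  unfold tA at hx
  exact (Multiset.mem_filter.mp hx).2

lemma tA_sum : ((tA s j).sum : ℤ) = (s.sum : ℤ) + 3 * j - 1 := by
  have hw := wA_nonneg hpos hc H
  have hcards : Multiset.card s ≤ s.sum := card_le_sum' s hpos
  unfold tA
  rw [sum_filter_pos, Multiset.sum_cons, sum_map_pred s hpos, Nat.cast_add,
    Nat.cast_sub hcards, Int.toNat_of_nonneg hw]
  ring

lemma tA_sum_nonneg : 0 ≤ (s.sum : ℤ) + 3 * j - 1 := by
  have := tA_sum hpos hc H
  omega

lemma tA_pos_all : ∀ x ∈ tA s j, 1 ≤ x := fun x hx => tA_pos hpos hc H x hx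

/-- Applying `tB` at `j - 1` to the branch-A image recovers `s`,
and the image lands in branch B. -/
lemma tA_spec : tB (tA s j) (j - 1) = s ∧ ¬ cond (tA s j) (j - 1) := by
  have hw := wA_nonneg hpos hc H
  set w : ℕ := (((Multiset.card s : ℤ) + 3 * j - 1)).toNat with hwdef
  have hwz : (w : ℤ) = (Multiset.card s : ℤ) + 3 * j - 1 := Int.toNat_of_nonneg hw
  rcases eq_or_ne s 0 with rfl | hs
  -- case s = 0 : tA = {w} with w = 3j-1 ≥ 2
  · have hj := H rfl
    have hw2 : 2 ≤ w := by simp at hwz ⊢; omega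
    have htA : tA 0 j = {w} := by
      unfold tA
      rw [Multiset.map_zero, Multiset.filter_cons_of_pos _ (by omega : 0 < w)]
      simp
    constructor
    · rw [htA]
      have hne : ({w} : Multiset ℕ) ≠ 0 := by simp
      rw [tB, if_neg hne]
      have hsup : ({w} : Multiset ℕ).sup = w := by simp
      have hcard : (Multiset.card ({w} : Multiset ℕ) : ℤ) = 1 := by simp
      rw [hsup]
      have : ((w : ℤ) - (Multiset.card ({w} : Multiset ℕ) : ℤ) - 3 * (j - 1) - 1).toNat = 0 := by
        rw [hcard]; simp at hwz ⊢; omega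
      rw [this]
      simp
    · unfold cond
      rw [htA]
      simp only [Multiset.sup_singleton, Multiset.card_singleton]
      simp at hwz ⊢
      omega
  -- case s ≠ 0
  · have hsup1 : 1 ≤ s.sup := sup_pos_of_ne hpos hc H hs
    have hcard1 : 1 ≤ Multiset.card s := by
      exact Multiset.card_pos.mpr hs
    have hcond' : (s.sup : ℤ) ≤ (Multiset.card s : ℤ) + 3 * j := hc
    rcases Nat.eq_zero_or_pos w with hw0 | hwpos
    -- subcase w = 0 : all parts are 1
    · have hall1 : ∀ x ∈ s, x = 1 := by
        intro x hx
        have hxle : x ≤ s.sup := Multiset.le_sup hx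
        have hx1 := hpos x hx
        have : (x : ℤ) ≤ (Multiset.card s : ℤ) + 3 * j := le_trans (by exact_mod_cast hxle) hcond'
        omega
      have hrep : s = Multiset.replicate (Multiset.card s) 1 :=
        Multiset.eq_replicate_card.mpr hall1
      have htA : tA s j = 0 := by
        unfold tA
        rw [← hwdef, Multiset.filter_cons_of_neg _ (by omega : ¬ 0 < w)]
        rw [Multiset.filter_eq_nil]
        intro a ha
        rcases Multiset.mem_map.mp ha with ⟨b, hb, rfl⟩
        have := hall1 b hb
        omega
      constructor
      · rw [htA, tB, if_pos rfl]
        have : ((-3 : ℤ) * (j - 1) - 2).toNat = Multiset.card s := by omega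
        rw [this, ← hrep]
      · rw [htA]
        unfold cond
        simp
        omega
    -- subcase w ≥ 1
    · have htA : tA s j = w ::ₘ (s.map (· - 1)).filter (0 < ·) := by
        unfold tA
        rw [← hwdef, Multiset.filter_cons_of_pos _ (by omega : 0 < w)]
      set F : Multiset ℕ := (s.map (· - 1)).filter (0 < ·) with hF
      have hFsup : F.sup = s.sup - 1 := by rw [hF, sup_filter_pos, sup_map_pred]
      have hFmap : F.map (· + 1) = s.filter (2 ≤ ·) := map_succ_filter_pos_map_pred s
      have hFcard : Multiset.card F = Multiset.card (s.filter (2 ≤ ·)) := by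
        have := congrArg Multiset.card hFmap
        simpa using this
      have hc2 : Multiset.card (s.filter (2 ≤ ·)) ≤ Multiset.card s :=
        Multiset.card_le_card (Multiset.filter_le _ s)
      have hsupA : (tA s j).sup = w := by
        rw [htA, Multiset.sup_cons, hFsup]
        have : s.sup - 1 ≤ w := by omega
        exact sup_eq_left.mpr this
      have hcardA : Multiset.card (tA s j) = 1 + Multiset.card (s.filter (2 ≤ ·)) := by
        rw [htA, Multiset.card_cons, hFcard]; omega
      constructor
      · have hne : tA s j ≠ 0 := by rw [htA]; exact Multiset.cons_ne_zero
        rw [tB, if_neg hne, hsupA]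
        have herase : (tA s j).erase w = F := by rw [htA, Multiset.erase_cons_head]
        rw [herase, hFmap]
        have hrepl : (((w : ℤ)) - (Multiset.card (tA s j) : ℤ) - 3 * (j - 1) - 1).toNat
            = Multiset.card s - Multiset.card (s.filter (2 ≤ ·)) := by
          rw [hcardA]; push_cast; omega
        rw [hrepl, ← filter_le_one_eq_replicate s hpos]
        exact Multiset.filter_add_not _ s
      · unfold cond
        rw [hsupA, hcardA]
        push_cast
        omega

end A

open Multiset

lemma sum_map_succ (s : Multiset ℕ) : (s.map (· + 1)).sum = s.sum + Multiset.card s := by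
  induction s using Multiset.induction_on with
  | empty => simp
  | cons a t ih =>
    rw [Multiset.map_cons, Multiset.sum_cons, Multiset.sum_cons, ih]
    simp only [Multiset.card_cons]
    omega

section B
variable {s : Multiset ℕ} {j : ℤ} (hpos : ∀ x ∈ s, 1 ≤ x) (hnc : ¬ cond s j)

include hpos hnc

lemma tB_pos : ∀ x ∈ tB s j, 1 ≤ x := by
  intro x hx
  unfold tB at hx
  split at hx
  · have := Multiset.eq_of_mem_replicate hx; omega
  · rcases Multiset.mem_add.mp hx with h | h
    · rcases Multiset.mem_map.mp h with ⟨b, _, rfl⟩; omega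
    · have := Multiset.eq_of_mem_replicate h; omega

lemma tB_sum : ((tB s j).sum : ℤ) = (s.sum : ℤ) - 3 * j - 2 := by
  unfold cond at hnc
  push_neg at hnc
  rcases eq_or_ne s 0 with rfl | hs
  · simp only [Multiset.sup_zero, Multiset.card_zero, Nat.cast_zero, Nat.bot_eq_zero] at hnc
    have hj : j ≤ -1 := by omega
    rw [tB, if_pos rfl, Multiset.sum_replicate]
    simp
    omega
  · have hmem : s.sup ∈ s := sup_mem hs
    have hsum : s.sum = s.sup + (s.erase s.sup).sum := by
      conv_lhs => rw [← Multiset.cons_erase hmem]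
      rw [Multiset.sum_cons]
    have hcardn : Multiset.card s = Multiset.card (s.erase s.sup) + 1 := by
      conv_lhs => rw [← Multiset.cons_erase hmem]
      rw [Multiset.card_cons]
    have hr : 0 ≤ (s.sup : ℤ) - (Multiset.card s : ℤ) - 3 * j - 1 := by omega
    have hrz : ((((s.sup : ℤ) - (Multiset.card s : ℤ) - 3 * j - 1).toNat : ℕ) : ℤ)
        = (s.sup : ℤ) - (Multiset.card s : ℤ) - 3 * j - 1 := Int.toNat_of_nonneg hr
    rw [tB, if_neg hs, Multiset.sum_add, Multiset.sum_replicate, sum_map_succ,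
      smul_eq_mul, mul_one, Nat.cast_add, Nat.cast_add]
    omega

lemma tB_sum_nonneg : 0 ≤ (s.sum : ℤ) - 3 * j - 2 := by
  have := tB_sum hpos hnc
  omega

lemma tB_spec : tA (tB s j) (j + 1) = s ∧ cond (tB s j) (j + 1) := by
  unfold cond at hnc
  push_neg at hnc
  rcases eq_or_ne s 0 with rfl | hs
  -- s = 0 : ν is a column of 1s of height -3j-2 ≥ 1
  · simp only [Multiset.sup_zero, Multiset.card_zero, Nat.cast_zero, Nat.bot_eq_zero] at hnc
    have hj : j ≤ -1 := by omega
    set k : ℕ := ((-3 : ℤ) * j - 2).toNat with hkdef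
    have hkz : (k : ℤ) = -3 * j - 2 := Int.toNat_of_nonneg (by omega)
    have hk1 : 1 ≤ k := by omega
    have htB : tB 0 j = Multiset.replicate k 1 := by rw [tB, if_pos rfl]
    have hcard : Multiset.card (Multiset.replicate k 1) = k := Multiset.card_replicate _ _
    have hsup : (Multiset.replicate k 1).sup = 1 := by
      rw [sup_replicate_one, if_neg (by omega : ¬ k = 0)]
    refine ⟨?_, ?_⟩
    · rw [htB]
      unfold tA
      rw [hcard]
      have hw0 : ((k : ℤ) + 3 * (j + 1) - 1).toNat = 0 := by omega
      rw [hw0, Multiset.map_replicate]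
      simp only [Nat.sub_self]
      rw [Multiset.filter_eq_nil]
      intro a ha
      rcases Multiset.mem_cons.mp ha with rfl | h
      · omega
      · have := Multiset.eq_of_mem_replicate h; omega
    · unfold cond
      rw [htB, hcard, hsup]
      omega
  -- s ≠ 0
  · have hmem : s.sup ∈ s := sup_mem hs
    have hsup1 : 1 ≤ s.sup := hpos _ hmem
    have hcard1 : 1 ≤ Multiset.card s := Multiset.card_pos.mpr hs
    have hcardn : Multiset.card s = Multiset.card (s.erase s.sup) + 1 := by
      conv_lhs => rw [← Multiset.cons_erase hmem]
      rw [Multiset.card_cons]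
    set r : ℕ := ((s.sup : ℤ) - (Multiset.card s : ℤ) - 3 * j - 1).toNat with hrdef
    have hrz : (r : ℤ) = (s.sup : ℤ) - (Multiset.card s : ℤ) - 3 * j - 1 :=
      Int.toNat_of_nonneg (by omega)
    have htB : tB s j = (s.erase s.sup).map (· + 1) + Multiset.replicate r 1 := by
      rw [tB, if_neg hs]
    have hcardB : (Multiset.card (tB s j) : ℤ) = (s.sup : ℤ) - 3 * j - 2 := by
      rw [htB, Multiset.card_add, Multiset.card_map, Multiset.card_replicate]
      push_cast
      omega
    have hsupB : ((tB s j).sup : ℤ) ≤ (s.sup : ℤ) + 1 := by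
      have : (tB s j).sup ≤ s.sup + 1 := by
        rw [Multiset.sup_le]
        intro b hb
        rw [htB] at hb
        rcases Multiset.mem_add.mp hb with h | h
        · rcases Multiset.mem_map.mp h with ⟨x, hx, rfl⟩
          have : x ≤ s.sup := Multiset.le_sup (Multiset.mem_of_mem_erase hx)
          omega
        · have := Multiset.eq_of_mem_replicate h; omega
      exact_mod_cast this
    refine ⟨?_, ?_⟩
    · unfold tA
      have hw : ((Multiset.card (tB s j) : ℤ) + 3 * (j + 1) - 1).toNat = s.sup := by
        rw [hcardB]; omega
      rw [hw]
      have hmap : (tB s j).map (· - 1) = s.erase s.sup + Multiset.replicate r 0 := by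
        rw [htB, Multiset.map_add, Multiset.map_map, Multiset.map_replicate]
        congr 1
        · exact Multiset.map_congr rfl (fun x _ => by simp) |>.trans (Multiset.map_id _)
      rw [hmap, Multiset.filter_cons_of_pos _ (by omega : 0 < s.sup), Multiset.filter_add]
      have h1 : (s.erase s.sup).filter (0 < ·) = s.erase s.sup := by
        rw [Multiset.filter_eq_self]
        intro a ha
        exact hpos a (Multiset.mem_of_mem_erase ha)
      have h2 : (Multiset.replicate r 0).filter (0 < ·) = 0 := by
        rw [Multiset.filter_eq_nil]
        intro a ha
        have := Multiset.eq_of_mem_replicate ha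
        omega
      rw [h1, h2, add_zero]
      exact Multiset.cons_erase hmem
    · unfold cond
      rw [hcardB]
      omega

end B

open Multiset

/-- signed partition counting function, `0` for negative arguments. -/
def Pz (z : ℤ) : ℤ := if 0 ≤ z then (partitionFun z.toNat : ℤ) else 0

def pSize (d : ℕ) (j : ℤ) : ℕ := ((d : ℤ) - gz j).toNat

abbrev PP (d : ℕ) (j : ℤ) := Nat.Partition (pSize d j)

noncomputable def bigS (d : ℕ) : Finset (Σ j : ℤ, PP d j) :=
  ((Finset.Icc (-(d : ℤ) - 1) ((d : ℤ) + 1)).filter (fun j => gz j ≤ (d : ℤ))).sigma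
    (fun _ => Finset.univ)

lemma mem_bigS {d : ℕ} {a : Σ j : ℤ, PP d j} :
    a ∈ bigS d ↔ (a.1 ∈ Finset.Icc (-(d : ℤ) - 1) ((d : ℤ) + 1) ∧ gz a.1 ≤ (d : ℤ)) := by
  unfold bigS
  rw [Finset.mem_sigma, Finset.mem_filter]
  simp

section Flip

variable {d : ℕ}

lemma pSize_eq {j : ℤ} (hle : gz j ≤ (d : ℤ)) : (pSize d j : ℤ) = (d : ℤ) - gz j :=
  Int.toNat_of_nonneg (by omega)

lemma parts_H {j : ℤ} (lam : PP d j) (hle : gz j ≤ (d : ℤ)) (hd : 1 ≤ d)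
    (h : cond lam.parts j) : lam.parts = 0 → 1 ≤ j := by
  intro h0
  have hsum := lam.parts_sum
  rw [h0] at hsum
  simp at hsum
  have hps := pSize_eq hle
  have hgz : gz j = (d : ℤ) := by omega
  unfold cond at h
  rw [h0] at h
  simp [Nat.bot_eq_zero] at h
  by_contra hj
  have hj0 : j = 0 := by omega
  rw [hj0] at hgz
  have := two_gz 0
  simp at this
  omega

/-- the Bressoud–Zeilberger involution. -/
def flip (d : ℕ) (hd : 1 ≤ d) (j : ℤ) (lam : PP d j) (hle : gz j ≤ (d : ℤ)) :
    Σ j : ℤ, PP d j :=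
  if h : cond lam.parts j then
    ⟨j - 1,
      { parts := tA lam.parts j
        parts_pos := fun {i} hi =>
          tA_pos (fun x hx => lam.parts_pos hx) h (parts_H lam hle hd h) i hi
        parts_sum := by
          have hs := tA_sum (s := lam.parts) (j := j)
            (fun x hx => lam.parts_pos hx) h (parts_H lam hle hd h)
          have h2 := lam.parts_sum
          have h3 := pSize_eq hle
          have h4 := gz_pred j
          have h5 : (0:ℤ) ≤ ((tA lam.parts j).sum : ℤ) := Int.natCast_nonneg _
          have h6 : ((pSize d (j-1) : ℕ) : ℤ) = ((d:ℤ) - gz (j-1)).toNat := rfl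
          unfold pSize
          omega }⟩
  else
    ⟨j + 1,
      { parts := tB lam.parts j
        parts_pos := fun {i} hi =>
          tB_pos (fun x hx => lam.parts_pos hx) h i hi
        parts_sum := by
          have hs := tB_sum (s := lam.parts) (j := j)
            (fun x hx => lam.parts_pos hx) h
          have h2 := lam.parts_sum
          have h3 := pSize_eq hle
          have h4 := gz_succ j
          have h5 : (0:ℤ) ≤ ((tB lam.parts j).sum : ℤ) := Int.natCast_nonneg _
          unfold pSize
          omega }⟩

lemma sigma_ext {j j' : ℤ} (h : j = j') {x : PP d j} {y : PP d j'}
    (hp : x.parts = y.parts) : (⟨j, x⟩ : Σ j : ℤ, PP d j) = ⟨j', y⟩ := by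
  subst h
  exact congrArg (fun z => (⟨j, z⟩ : Σ j : ℤ, PP d j)) (Nat.Partition.ext hp)

lemma flip_mem (hd : 1 ≤ d) (j : ℤ) (lam : PP d j) (hle : gz j ≤ (d : ℤ)) :
    flip d hd j lam hle ∈ bigS d := by
  rw [mem_bigS]
  unfold flip
  split
  all_goals dsimp only
  case isTrue h =>
    have hs := tA_sum_nonneg (s := lam.parts) (j := j)
      (fun x hx => lam.parts_pos hx) h (parts_H lam hle hd h)
    have h2 := lam.parts_sum
    have h3 := pSize_eq hle
    have h4 := gz_pred j
    have hle' : gz (j - 1) ≤ (d : ℤ) := by omega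
    have habs := abs_le.mp (abs_le_of_gz_le hle')
    refine ⟨Finset.mem_Icc.mpr ⟨by omega, by omega⟩, hle'⟩
  case isFalse h =>
    have hs := tB_sum_nonneg (s := lam.parts) (j := j)
      (fun x hx => lam.parts_pos hx) h
    have h2 := lam.parts_sum
    have h3 := pSize_eq hle
    have h4 := gz_succ j
    have hle' : gz (j + 1) ≤ (d : ℤ) := by omega
    have habs := abs_le.mp (abs_le_of_gz_le hle')
    refine ⟨Finset.mem_Icc.mpr ⟨by omega, by omega⟩, hle'⟩

lemma flip_flip (hd : 1 ≤ d) (j : ℤ) (lam : PP d j) (hle : gz j ≤ (d : ℤ))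
    (hle2 : gz (flip d hd j lam hle).1 ≤ (d : ℤ)) :
    flip d hd (flip d hd j lam hle).1 (flip d hd j lam hle).2 hle2 = ⟨j, lam⟩ := by
  by_cases h : cond lam.parts j
  · have hspec := tA_spec (s := lam.parts) (j := j)
      (fun x hx => lam.parts_pos hx) h (parts_H lam hle hd h)
    revert hle2
    rw [flip, dif_pos h]
    intro hle2
    rw [flip, dif_neg hspec.2]
    exact sigma_ext (by ring) hspec.1
  · have hspec := tB_spec (s := lam.parts) (j := j)
      (fun x hx => lam.parts_pos hx) h
    revert hle2
    rw [flip, dif_neg h]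
    intro hle2
    rw [flip, dif_pos hspec.2]
    exact sigma_ext (by ring) hspec.1

lemma flip_fst (hd : 1 ≤ d) (j : ℤ) (lam : PP d j) (hle : gz j ≤ (d : ℤ)) :
    (flip d hd j lam hle).1 = j - 1 ∨ (flip d hd j lam hle).1 = j + 1 := by
  unfold flip
  split
  · left; rfl
  · right; rfl

end Flip

lemma euler_rec (d : ℕ) (hd : 1 ≤ d) :
    ∑ j ∈ Finset.Icc (-(d : ℤ) - 1) ((d : ℤ) + 1), eps j * Pz ((d : ℤ) - gz j) = 0 := by
  have h1 : ∑ j ∈ Finset.Icc (-(d : ℤ) - 1) ((d : ℤ) + 1), eps j * Pz ((d : ℤ) - gz j)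
      = ∑ j ∈ (Finset.Icc (-(d : ℤ) - 1) ((d : ℤ) + 1)).filter (fun j => gz j ≤ (d : ℤ)),
          eps j * (partitionFun (pSize d j) : ℤ) := by
    rw [Finset.sum_filter]
    apply Finset.sum_congr rfl
    intro j _
    unfold Pz pSize
    by_cases h : gz j ≤ (d : ℤ)
    · rw [if_pos h, if_pos (by omega)]
    · rw [if_neg h, if_neg (by omega), mul_zero]
  rw [h1]
  have h2 : ∑ j ∈ (Finset.Icc (-(d : ℤ) - 1) ((d : ℤ) + 1)).filter (fun j => gz j ≤ (d : ℤ)),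
      eps j * (partitionFun (pSize d j) : ℤ) = ∑ x ∈ bigS d, eps x.1 := by
    unfold bigS
    rw [Finset.sum_sigma]
    apply Finset.sum_congr rfl
    intro j _
    have hstep : (∑ s : PP d j, eps (Sigma.mk (β := fun j => PP d j) j s).fst)
        = ∑ s : PP d j, eps j :=
      Finset.sum_congr rfl (fun _ _ => rfl)
    rw [hstep, Finset.sum_const, Finset.card_univ, nsmul_eq_mul, mul_comm]
    rfl
  rw [h2]
  apply Finset.sum_involution
    (g := fun a ha => flip d hd a.1 a.2 (mem_bigS.mp ha).2)
  · -- sign flip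
    intro a ha
    rcases flip_fst hd a.1 a.2 (mem_bigS.mp ha).2 with h | h <;> rw [h]
    · rw [eps_pred]; ring
    · rw [eps_succ]; ring
  · -- not fixed
    intro a ha _
    intro heq
    have := congrArg Sigma.fst heq
    rcases flip_fst hd a.1 a.2 (mem_bigS.mp ha).2 with h | h <;> rw [h] at this <;> omega
  · -- involution
    intro a ha
    exact flip_flip hd a.1 a.2 (mem_bigS.mp ha).2 _
  · -- membership
    intro a ha
    exact flip_mem hd a.1 a.2 (mem_bigS.mp ha).2


lemma pent_inj {j j' : ℤ} (h : j * (3 * j + 1) = j' * (3 * j' + 1)) : j = j' := by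
  have h2 : (j - j') * (3 * (j + j') + 1) = 0 := by ring_nf; nlinarith [h]
  rcases mul_eq_zero.mp h2 with h3 | h3
  · omega
  · omega

lemma pentCoeff_natCast (m : ℕ) : pentCoeff (m : ℤ) =
    (∑ k ∈ Finset.range (m + 1), (if 2 * (m : ℤ) = (k : ℤ) * (3 * k + 1) then (-1 : ℤ) ^ k else 0))
    + (∑ k ∈ Finset.range (m + 1),
        (if 2 * (m : ℤ) = (k : ℤ) * (3 * k - 1) ∧ 1 ≤ k then (-1 : ℤ) ^ k else 0)) := by
  unfold pentCoeff
  rw [Int.toNat_natCast, Finset.sum_add_distrib]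

lemma pent_val (m : ℕ) (j : ℤ) (h : 2 * (m : ℤ) = j * (3 * j + 1)) :
    pentCoeff (m : ℤ) = eps j := by
  rw [pentCoeff_natCast]
  rcases le_or_gt 0 j with hj | hj
  · set k₀ : ℕ := j.toNat with hk₀
    have hk₀z : (k₀ : ℤ) = j := Int.toNat_of_nonneg hj
    have hjj : 0 ≤ j * (j - 1) := by
      rcases (by omega : j = 0 ∨ 1 ≤ j) with rfl | h1
      · simp
      · exact mul_nonneg (by omega) (by omega)
    have hk₀m : k₀ ≤ m := by
      have : (k₀ : ℤ) ≤ (m : ℤ) := by nlinarith [h, hk₀z, hjj]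
      exact_mod_cast this
    have h1 : (∑ k ∈ Finset.range (m + 1),
        (if 2 * (m : ℤ) = (k : ℤ) * (3 * k + 1) then (-1 : ℤ) ^ k else 0)) = (-1 : ℤ) ^ k₀ := by
      rw [Finset.sum_eq_single_of_mem k₀ (Finset.mem_range.mpr (by omega))]
      · rw [if_pos (by rw [hk₀z]; exact h)]
      · intro k _ hk
        rw [if_neg]
        intro hc
        have : (k : ℤ) = j := pent_inj (by linarith)
        omega
    have h2 : (∑ k ∈ Finset.range (m + 1),
        (if 2 * (m : ℤ) = (k : ℤ) * (3 * k - 1) ∧ 1 ≤ k then (-1 : ℤ) ^ k else 0)) = 0 := by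
      apply Finset.sum_eq_zero
      intro k _
      rw [if_neg]
      rintro ⟨hc, hk1⟩
      have : (-(k : ℤ)) = j := pent_inj (by ring_nf; ring_nf at hc h; linarith)
      omega
    rw [h1, h2, add_zero, ← eps_natCast, hk₀z]
  · set k₀ : ℕ := (-j).toNat with hk₀
    have hk₀z : (k₀ : ℤ) = -j := Int.toNat_of_nonneg (by omega)
    have hk₀1 : 1 ≤ k₀ := by omega
    have hjj : 0 ≤ (-j) * (-j - 1) := mul_nonneg (by omega) (by omega)
    have hk₀m : k₀ ≤ m := by
      have : (k₀ : ℤ) ≤ (m : ℤ) := by nlinarith [h, hk₀z, hjj]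
      exact_mod_cast this
    have h1 : (∑ k ∈ Finset.range (m + 1),
        (if 2 * (m : ℤ) = (k : ℤ) * (3 * k + 1) then (-1 : ℤ) ^ k else 0)) = 0 := by
      apply Finset.sum_eq_zero
      intro k _
      rw [if_neg]
      intro hc
      have : (k : ℤ) = j := pent_inj (by linarith)
      omega
    have h2 : (∑ k ∈ Finset.range (m + 1),
        (if 2 * (m : ℤ) = (k : ℤ) * (3 * k - 1) ∧ 1 ≤ k then (-1 : ℤ) ^ k else 0))
        = (-1 : ℤ) ^ k₀ := by
      rw [Finset.sum_eq_single_of_mem k₀ (Finset.mem_range.mpr (by omega))]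
      · rw [if_pos ⟨by ring_nf; ring_nf at h; nlinarith [hk₀z, h], hk₀1⟩]
      · intro k _ hk
        rw [if_neg]
        rintro ⟨hc, hk1⟩
        have : (-(k : ℤ)) = j := pent_inj (by ring_nf; ring_nf at hc h; linarith)
        omega
    rw [h1, h2, zero_add, ← eps_neg j, ← hk₀z, eps_natCast]

lemma pent_zero (m : ℕ) (h : ∀ j : ℤ, 2 * (m : ℤ) ≠ j * (3 * j + 1)) :
    pentCoeff (m : ℤ) = 0 := by
  rw [pentCoeff_natCast]
  have h1 : (∑ k ∈ Finset.range (m + 1),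
      (if 2 * (m : ℤ) = (k : ℤ) * (3 * k + 1) then (-1 : ℤ) ^ k else 0)) = 0 := by
    apply Finset.sum_eq_zero
    intro k _
    exact if_neg (h k)
  have h2 : (∑ k ∈ Finset.range (m + 1),
      (if 2 * (m : ℤ) = (k : ℤ) * (3 * k - 1) ∧ 1 ≤ k then (-1 : ℤ) ^ k else 0)) = 0 := by
    apply Finset.sum_eq_zero
    intro k _
    rw [if_neg]
    rintro ⟨hc, _⟩
    exact h (-(k : ℤ)) (by ring_nf; ring_nf at hc; omega)
  rw [h1, h2, add_zero]

lemma pent_expand (D : ℕ) (m : ℕ) (hm : m ≤ D) :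
    pentCoeff (m : ℤ) = ∑ j ∈ Finset.Icc (-(D : ℤ) - 1) ((D : ℤ) + 1),
      (if 2 * (m : ℤ) = j * (3 * j + 1) then eps j else 0) := by
  by_cases hex : ∃ j : ℤ, 2 * (m : ℤ) = j * (3 * j + 1)
  · obtain ⟨j₀, hj₀⟩ := hex
    have hgz : gz j₀ = (m : ℤ) := by
      have := two_gz j₀
      omega
    have hmem : j₀ ∈ Finset.Icc (-(D : ℤ) - 1) ((D : ℤ) + 1) := by
      have habs := abs_le.mp (abs_le_of_gz_le (by omega : gz j₀ ≤ (D : ℤ)))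
      exact Finset.mem_Icc.mpr ⟨by omega, by omega⟩
    rw [pent_val m j₀ hj₀]
    rw [Finset.sum_eq_single_of_mem j₀ hmem]
    · rw [if_pos hj₀]
    · intro j _ hj
      rw [if_neg]
      intro hc
      exact hj (pent_inj (by omega))
  · push_neg at hex
    rw [pent_zero m hex]
    symm
    apply Finset.sum_eq_zero
    intro j _
    exact if_neg (hex j)

lemma inner_single (D : ℕ) (j : ℤ) :
    (∑ m ∈ Finset.range (D + 1),
      (if 2 * (m : ℤ) = j * (3 * j + 1) then (partitionFun (D - m) : ℤ) else 0))
    = Pz ((D : ℤ) - gz j) := by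
  have h2g := two_gz j
  have hgnn := gz_nonneg j
  by_cases hj : gz j ≤ (D : ℤ)
  · set m₀ : ℕ := (gz j).toNat with hm₀
    have hm₀z : (m₀ : ℤ) = gz j := Int.toNat_of_nonneg hgnn
    rw [Finset.sum_eq_single_of_mem m₀ (Finset.mem_range.mpr (by omega))]
    · rw [if_pos (by omega), Pz, if_pos (by omega)]
      have : ((D : ℤ) - gz j).toNat = D - m₀ := by omega
      rw [this]
    · intro m _ hm
      rw [if_neg]
      intro hc
      omega
  · rw [Pz, if_neg (by omega)]
    apply Finset.sum_eq_zero
    intro m hm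
    rw [Finset.mem_range] at hm
    rw [if_neg]
    intro hc
    omega

lemma euler_pent (D : ℕ) :
    ∑ m ∈ Finset.range (D + 1), pentCoeff (m : ℤ) * (partitionFun (D - m) : ℤ)
      = if D = 0 then 1 else 0 := by
  rcases Nat.eq_zero_or_pos D with rfl | hD
  · rw [if_pos rfl]
    rw [Finset.sum_range_one]
    rw [pent_val 0 0 (by norm_num)]
    have : partitionFun (0 - 0) = 1 := by simp [partitionFun]
    rw [this]
    simp [eps]
  · rw [if_neg (by omega)]
    have hstep : ∀ m ∈ Finset.range (D + 1),
        pentCoeff (m : ℤ) * (partitionFun (D - m) : ℤ)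
        = ∑ j ∈ Finset.Icc (-(D : ℤ) - 1) ((D : ℤ) + 1),
            eps j * (if 2 * (m : ℤ) = j * (3 * j + 1) then (partitionFun (D - m) : ℤ) else 0) := by
      intro m hm
      rw [Finset.mem_range] at hm
      rw [pent_expand D m (by omega), Finset.sum_mul]
      apply Finset.sum_congr rfl
      intro j _
      rw [ite_mul, zero_mul, mul_ite, mul_zero]
    rw [Finset.sum_congr rfl hstep, Finset.sum_comm]
    have hinner : ∀ j ∈ Finset.Icc (-(D : ℤ) - 1) ((D : ℤ) + 1),
        (∑ m ∈ Finset.range (D + 1),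
          eps j * (if 2 * (m : ℤ) = j * (3 * j + 1) then (partitionFun (D - m) : ℤ) else 0))
        = eps j * Pz ((D : ℤ) - gz j) := by
      intro j _
      rw [← Finset.mul_sum, inner_single]
    rw [Finset.sum_congr rfl hinner]
    exact euler_rec D hD

open ArithmeticFunction

/-- entries of the matrix `M`. -/
def mEnt (K J : ℕ) : ℤ :=
  ∑ d ∈ Nat.divisors K,
    (if J ≤ d then (partitionFun (d - J) : ℤ) else 0) * moebius (K / d)

lemma mobius_step (N J : ℕ) (hJ : 1 ≤ J) :
    ∑ K ∈ Nat.divisors N, mEnt K J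
      = if J ≤ N then (partitionFun (N - J) : ℤ) else 0 := by
  set F : ArithmeticFunction ℤ :=
    ⟨fun d => if J ≤ d then (partitionFun (d - J) : ℤ) else 0, by
      show (if J ≤ 0 then (partitionFun (0 - J) : ℤ) else 0) = 0
      rw [if_neg (by omega)]⟩ with hF
  have hFapp : ∀ d, F d = if J ≤ d then (partitionFun (d - J) : ℤ) else 0 := fun d => rfl
  have hm : ∀ K, mEnt K J = (F * (moebius : ArithmeticFunction ℤ)) K := by
    intro K
    rw [mEnt, ArithmeticFunction.mul_apply,
      Nat.sum_divisorsAntidiagonal (f := fun d e => F d * moebius e)]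
    exact Finset.sum_congr rfl fun d _ => by rw [hFapp]
  calc ∑ K ∈ Nat.divisors N, mEnt K J
      = ∑ K ∈ Nat.divisors N, (F * (moebius : ArithmeticFunction ℤ)) K :=
        Finset.sum_congr rfl (fun K _ => hm K)
    _ = ((F * (moebius : ArithmeticFunction ℤ)) * (ArithmeticFunction.zeta : ArithmeticFunction ℕ)) N :=
        (ArithmeticFunction.coe_mul_zeta_apply).symm
    _ = (F * ((moebius : ArithmeticFunction ℤ) * (ArithmeticFunction.zeta : ArithmeticFunction ℕ))) N := by
        rw [mul_assoc]
    _ = F N := by rw [ArithmeticFunction.moebius_mul_coe_zeta, mul_one]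
    _ = _ := hFapp N

lemma pair_reindex (I J : ℕ) (f : ℕ → ℕ → ℤ) :
    ∑ K ∈ Finset.Icc 1 I, ∑ s ∈ Finset.range (I / K), f ((s + 1) * K) K
      = ∑ N ∈ Finset.Icc 1 I, ∑ K ∈ Nat.divisors N, f N K := by
  rw [Finset.sum_sigma', Finset.sum_sigma']
  apply Finset.sum_nbij' (i := fun x => (⟨(x.2 + 1) * x.1, x.1⟩ : Σ _ : ℕ, ℕ))
    (j := fun x => (⟨x.2, x.1 / x.2 - 1⟩ : Σ _ : ℕ, ℕ))
  · rintro ⟨K, s⟩ hx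
    rw [Finset.mem_sigma, Finset.mem_Icc, Finset.mem_range] at hx
    dsimp only at hx ⊢
    obtain ⟨⟨hK1, hKI⟩, hs⟩ := hx
    rw [Finset.mem_sigma, Finset.mem_Icc]
    dsimp only
    have hle : (s + 1) * K ≤ I := (Nat.le_div_iff_mul_le (by omega)).mp (by omega)
    have hpos : 0 < (s + 1) * K := Nat.mul_pos (Nat.succ_pos s) (by omega)
    exact ⟨⟨by omega, hle⟩, Nat.mem_divisors.mpr ⟨dvd_mul_left K (s + 1), by omega⟩⟩
  · rintro ⟨N, K⟩ hx
    rw [Finset.mem_sigma, Finset.mem_Icc] at hx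
    dsimp only at hx ⊢
    obtain ⟨⟨hN1, hNI⟩, hK⟩ := hx
    rw [Nat.mem_divisors] at hK
    obtain ⟨hdvd, hN0⟩ := hK
    have hK1 : 1 ≤ K := by
      rcases Nat.eq_zero_or_pos K with rfl | h
      · exact absurd (Nat.eq_zero_of_zero_dvd hdvd) hN0
      · omega
    have hKN : K ≤ N := Nat.le_of_dvd (by omega) hdvd
    have hNK1 : 1 ≤ N / K := Nat.one_le_div_iff (by omega) |>.mpr hKN
    rw [Finset.mem_sigma, Finset.mem_Icc, Finset.mem_range]
    dsimp only
    refine ⟨⟨hK1, le_trans hKN hNI⟩, ?_⟩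
    have : N / K ≤ I / K := Nat.div_le_div_right hNI
    omega
  · rintro ⟨K, s⟩ hx
    rw [Finset.mem_sigma, Finset.mem_Icc, Finset.mem_range] at hx
    dsimp only at hx ⊢
    obtain ⟨⟨hK1, hKI⟩, hs⟩ := hx
    have h1 : (s + 1) * K / K = s + 1 := Nat.mul_div_cancel _ (by omega)
    rw [h1, Nat.add_sub_cancel]
  · rintro ⟨N, K⟩ hx
    rw [Finset.mem_sigma, Finset.mem_Icc] at hx
    dsimp only at hx ⊢
    obtain ⟨⟨hN1, hNI⟩, hK⟩ := hx
    rw [Nat.mem_divisors] at hK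
    obtain ⟨hdvd, hN0⟩ := hK
    have hK1 : 1 ≤ K := by
      rcases Nat.eq_zero_or_pos K with rfl | h
      · exact absurd (Nat.eq_zero_of_zero_dvd hdvd) hN0
      · omega
    have hKN : K ≤ N := Nat.le_of_dvd (by omega) hdvd
    have hNK1 : 1 ≤ N / K := Nat.one_le_div_iff (by omega) |>.mpr hKN
    have h2 : (N / K - 1 + 1) * K = N := by
      rw [Nat.sub_add_cancel hNK1, Nat.div_mul_cancel hdvd]
    rw [h2]
  · rintro ⟨K, s⟩ _
    rfl

lemma key (I J : ℕ) (hI : 1 ≤ I) (hJ : 1 ≤ J) :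
    ∑ K ∈ Finset.Icc 1 I, aEnt I K * mEnt K J = if I = J then 1 else 0 := by
  have h1 : ∑ K ∈ Finset.Icc 1 I, aEnt I K * mEnt K J
      = ∑ K ∈ Finset.Icc 1 I, ∑ s ∈ Finset.range (I / K),
          pentCoeff ((I : ℤ) - ((s : ℤ) + 1) * K) * mEnt K J := by
    apply Finset.sum_congr rfl
    intro K _
    rw [aEnt, Finset.sum_mul]
  have h2 : ∑ K ∈ Finset.Icc 1 I, ∑ s ∈ Finset.range (I / K),
        pentCoeff ((I : ℤ) - ((s : ℤ) + 1) * K) * mEnt K J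
      = ∑ N ∈ Finset.Icc 1 I, ∑ K ∈ Nat.divisors N,
          pentCoeff ((I : ℤ) - (N : ℤ)) * mEnt K J := by
    have := pair_reindex I J (fun N K => pentCoeff ((I : ℤ) - (N : ℤ)) * mEnt K J)
    rw [← this]
    apply Finset.sum_congr rfl
    intro K _
    apply Finset.sum_congr rfl
    intro s _
    push_cast
    ring_nf
  have h3 : ∑ N ∈ Finset.Icc 1 I, ∑ K ∈ Nat.divisors N,
        pentCoeff ((I : ℤ) - (N : ℤ)) * mEnt K J
      = ∑ N ∈ Finset.Icc 1 I, pentCoeff ((I : ℤ) - (N : ℤ)) *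
          (if J ≤ N then (partitionFun (N - J) : ℤ) else 0) := by
    apply Finset.sum_congr rfl
    intro N hN
    rw [Finset.mem_Icc] at hN
    rw [← Finset.mul_sum, mobius_step N J hJ]
  rw [h1, h2, h3]
  rcases le_or_gt J I with hJI | hJI
  · -- main case J ≤ I
    have hsub : Finset.Icc J I ⊆ Finset.Icc 1 I := by
      intro x hx
      rw [Finset.mem_Icc] at hx ⊢
      omega
    rw [← Finset.sum_subset hsub (by
      intro x hx hnx
      rw [Finset.mem_Icc] at hx
      rw [Finset.mem_Icc] at hnx
      rw [if_neg (by omega), mul_zero])]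
    set D : ℕ := I - J with hD
    have h4 : ∑ N ∈ Finset.Icc J I, pentCoeff ((I : ℤ) - (N : ℤ)) *
          (if J ≤ N then (partitionFun (N - J) : ℤ) else 0)
        = ∑ m ∈ Finset.range (D + 1), pentCoeff ((m : ℕ) : ℤ) * (partitionFun (D - m) : ℤ) := by
      apply Finset.sum_nbij' (i := fun N => I - N) (j := fun m => I - m)
      · intro N hN
        rw [Finset.mem_Icc] at hN
        rw [Finset.mem_range]
        omega
      · intro m hm
        rw [Finset.mem_range] at hm
        rw [Finset.mem_Icc]
        omega
      · intro N hN
        rw [Finset.mem_Icc] at hN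
        omega
      · intro m hm
        rw [Finset.mem_range] at hm
        omega
      · intro N hN
        rw [Finset.mem_Icc] at hN
        rw [if_pos hN.1]
        have hc : ((I - N : ℕ) : ℤ) = (I : ℤ) - (N : ℤ) := by omega
        rw [hc]
        have harg : N - J = D - (I - N) := by omega
        rw [harg]
    rw [h4, euler_pent D]
    have : D = 0 ↔ I = J := by omega
    rcases eq_or_ne I J with h | h
    · rw [if_pos (by omega), if_pos h]
    · rw [if_neg (by omega), if_neg h]
  · -- case J > I : everything vanishes
    rw [if_neg (by omega)]
    apply Finset.sum_eq_zero
    intro N hN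
    rw [Finset.mem_Icc] at hN
    rw [if_neg (by omega), mul_zero]

lemma aEnt_zero {I K : ℕ} (h : I < K) : aEnt I K = 0 := by
  rw [aEnt, Nat.div_eq_of_lt h]
  simp

lemma mEnt_zero {K J : ℕ} (h : K < J) : mEnt K J = 0 := by
  rw [mEnt]
  apply Finset.sum_eq_zero
  intro d hd
  rw [Nat.mem_divisors] at hd
  have : d ≤ K := Nat.le_of_dvd (by omega) hd.1
  rw [if_neg (by omega), zero_mul]

lemma Amat_apply (n : ℕ) (i k : Fin n) : Amat n i k = aEnt ((i : ℕ) + 1) ((k : ℕ) + 1) := by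
  rw [Amat]
  split
  · rfl
  · rw [aEnt_zero (by omega)]

lemma Mmat_apply (n : ℕ) (k j : Fin n) : Mmat n k j = mEnt ((k : ℕ) + 1) ((j : ℕ) + 1) := by
  rw [Mmat, mEnt]
  split
  · rfl
  · rw [← mEnt, mEnt_zero (by omega)]

lemma AM_eq_one (n : ℕ) (hn : 1 ≤ n) : Amat n * Mmat n = 1 := by
  ext i j
  rw [Matrix.mul_apply, Matrix.one_apply]
  have h1 : ∑ k : Fin n, Amat n i k * Mmat n k j
      = ∑ k ∈ Finset.range n, aEnt ((i : ℕ) + 1) (k + 1) * mEnt (k + 1) ((j : ℕ) + 1) := by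
    rw [← Fin.sum_univ_eq_sum_range (fun k => aEnt ((i : ℕ) + 1) (k + 1) * mEnt (k + 1) ((j : ℕ) + 1)) n]
    apply Finset.sum_congr rfl
    intro k _
    rw [Amat_apply, Mmat_apply]
  have h2 : ∑ k ∈ Finset.range n, aEnt ((i : ℕ) + 1) (k + 1) * mEnt (k + 1) ((j : ℕ) + 1)
      = ∑ K ∈ Finset.Icc 1 n, aEnt ((i : ℕ) + 1) K * mEnt K ((j : ℕ) + 1) := by
    apply Finset.sum_nbij' (i := fun k => k + 1) (j := fun K => K - 1)
    · intro k hk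
      rw [Finset.mem_range] at hk
      rw [Finset.mem_Icc]
      omega
    · intro K hK
      rw [Finset.mem_Icc] at hK
      rw [Finset.mem_range]
      omega
    · intro k _
      omega
    · intro K hK
      rw [Finset.mem_Icc] at hK
      omega
    · intro k _
      rfl
  have hsub : Finset.Icc 1 ((i : ℕ) + 1) ⊆ Finset.Icc 1 n := by
    intro x hx
    rw [Finset.mem_Icc] at hx ⊢
    have := i.isLt
    omega
  have h3 : ∑ K ∈ Finset.Icc 1 n, aEnt ((i : ℕ) + 1) K * mEnt K ((j : ℕ) + 1)
      = ∑ K ∈ Finset.Icc 1 ((i : ℕ) + 1), aEnt ((i : ℕ) + 1) K * mEnt K ((j : ℕ) + 1) := by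
    symm
    apply Finset.sum_subset hsub
    intro x hx hnx
    rw [Finset.mem_Icc] at hx
    rw [Finset.mem_Icc] at hnx
    rw [aEnt_zero (by omega), zero_mul]
  rw [h1, h2, h3, key ((i : ℕ) + 1) ((j : ℕ) + 1) (by omega) (by omega)]
  rcases eq_or_ne i j with h | h
  · rw [if_pos (by rw [h]), if_pos h]
  · rw [if_neg (by intro hc; exact h (Fin.ext (by omega))), if_neg h]



end Stmt8

theorem statement8 (n : ℕ) (hn : 1 ≤ n) :
    Mmat n * Amat n = 1 ∧ Amat n * Mmat n = 1 := by
  have hAM := Stmt8.AM_eq_one n hn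
  exact ⟨mul_eq_one_comm.mp hAM, hAM⟩
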